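/- The differential of self-attention f at X = (x₁,…,x_n) applied to ε = (ε₁,…,ε_n) is given componentwise by (D_X f)(ε)_i = V Σ_j P_{ij}(x_j - Σ_k P_{ik} x_k) x_iᵀ Aᵀ ε_j + V Σ_j P_{ij} ε_j + V Σ_j P_{ij}(x_j - Σ_k P_{ik} x_k) x_jᵀ A ε_i, where P_{ij} = exp(x_iᵀAᵀx_j)/Σ_k exp(x_iᵀAᵀx_k). -/

import Mathlib

open Matrix

/-- Self-attention as a map between sequence spaces equipped with the Frobenius norm. -/
noncomputable def attnF (n d k : ℕ) (A : Matrix (Fin d) (Fin d) ℝ)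
    (V : Matrix (Fin k) (Fin d) ℝ) :
    PiLp 2 (fun _ : Fin n => EuclideanSpace ℝ (Fin d)) →
      PiLp 2 (fun _ : Fin n => EuclideanSpace ℝ (Fin k)) :=
  fun x => WithLp.toLp 2 (fun i => WithLp.toLp 2 (V.mulVec (∑ j, (Real.exp ((x i) ⬝ᵥ (Aᵀ.mulVec (x j))) /
      ∑ l, Real.exp ((x i) ⬝ᵥ (Aᵀ.mulVec (x l)))) • x j)))

noncomputable def projCLM (n d : ℕ) (i : Fin n) :
    PiLp 2 (fun _ : Fin n => EuclideanSpace ℝ (Fin d)) →L[ℝ] EuclideanSpace ℝ (Fin d) :=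
  PiLp.proj 2 (fun _ : Fin n => EuclideanSpace ℝ (Fin d)) i

@[simp] lemma projCLM_apply (n d : ℕ) (i : Fin n)
    (y : PiLp 2 (fun _ : Fin n => EuclideanSpace ℝ (Fin d))) : projCLM n d i y = y i := rfl

noncomputable def dotCLM (d : ℕ) (A : Matrix (Fin d) (Fin d) ℝ) :
    EuclideanSpace ℝ (Fin d) →L[ℝ] EuclideanSpace ℝ (Fin d) →L[ℝ] ℝ :=
  LinearMap.toContinuousLinearMap
    { toFun := fun u => LinearMap.toContinuousLinearMap
        { toFun := fun v => u ⬝ᵥ Aᵀ.mulVec v,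
          map_add' := fun v w => by
            show u ⬝ᵥ Aᵀ *ᵥ (v + w) = u ⬝ᵥ Aᵀ *ᵥ v + u ⬝ᵥ Aᵀ *ᵥ w
            rw [Matrix.mulVec_add, dotProduct_add]
          map_smul' := fun c v => by
            show u ⬝ᵥ Aᵀ *ᵥ (c • v) = c * (u ⬝ᵥ Aᵀ *ᵥ v)
            rw [Matrix.mulVec_smul, dotProduct_smul]; rfl }
      map_add' := fun u v => ContinuousLinearMap.ext fun w =>
        add_dotProduct u v (Aᵀ.mulVec w)
      map_smul' := fun c u => ContinuousLinearMap.ext fun w =>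
        smul_dotProduct c u (Aᵀ.mulVec w) }

@[simp] lemma dotCLM_apply (d : ℕ) (A : Matrix (Fin d) (Fin d) ℝ)
    (u v : EuclideanSpace ℝ (Fin d)) : dotCLM d A u v = u ⬝ᵥ Aᵀ.mulVec v := rfl

noncomputable def mulVecCLM (d k : ℕ) (V : Matrix (Fin k) (Fin d) ℝ) :
    EuclideanSpace ℝ (Fin d) →L[ℝ] EuclideanSpace ℝ (Fin k) :=
  LinearMap.toContinuousLinearMap
    { toFun := fun u => WithLp.toLp 2 (V.mulVec u),
      map_add' := fun u v => by simp [Matrix.mulVec_add],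
      map_smul' := fun c u => by simp [Matrix.mulVec_smul] }

@[simp] lemma mulVecCLM_apply (d k : ℕ) (V : Matrix (Fin k) (Fin d) ℝ)
    (u : EuclideanSpace ℝ (Fin d)) : mulVecCLM d k V u = WithLp.toLp 2 (V.mulVec u) := rfl

lemma vec_alg0 {M : Type*} [AddCommGroup M] [Module ℝ M] {n : ℕ}
    (v ε' : Fin n → M) (e γ : Fin n → ℝ) (hZ : (∑ l, e l) ≠ 0) :
    ∑ j, ((e j * (∑ l, e l)⁻¹) • ε' j +
      (e j * -((∑ l, e l)⁻¹ * (∑ l, e l * γ l) * (∑ l, e l)⁻¹) +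
       (∑ l, e l)⁻¹ * (e j * γ j)) • v j) =
    (∑ j, ((e j / ∑ l, e l) * γ j) • (v j - ∑ l, (e l / ∑ l', e l') • v l)) +
      ∑ j, (e j / ∑ l, e l) • ε' j := by
  rw [Finset.sum_add_distrib]
  have hscal : ∀ j, e j * -((∑ l, e l)⁻¹ * (∑ l, e l * γ l) * (∑ l, e l)⁻¹) +
      (∑ l, e l)⁻¹ * (e j * γ j)
      = (e j / (∑ l, e l)) * γ j - (∑ l, (e l / (∑ l', e l')) * γ l) * (e j / (∑ l, e l)) := by
    intro j
    have hs : ∑ l, (e l / (∑ l', e l')) * γ l = (∑ l, e l * γ l) / (∑ l', e l') := by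
      rw [Finset.sum_div]; exact Finset.sum_congr rfl fun l _ => by ring
    rw [hs]
    field_simp
    ring
  have expand : ∑ j, ((e j / ∑ l, e l) * γ j) • (v j - ∑ l, (e l / ∑ l', e l') • v l)
      = ∑ j, (((e j / ∑ l, e l) * γ j) -
          (∑ l, (e l / (∑ l', e l')) * γ l) * (e j / ∑ l, e l)) • v j := by
    simp only [smul_sub, Finset.sum_sub_distrib, sub_smul]
    congr 1
    rw [← Finset.sum_smul, Finset.smul_sum]
    exact Finset.sum_congr rfl fun j _ => (smul_smul _ _ _)
  rw [expand, add_comm]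
  exact congrArg₂ (· + ·) (Finset.sum_congr rfl fun j _ => by rw [hscal j])
    (Finset.sum_congr rfl fun j _ => by rw [div_eq_mul_inv])

lemma vec_alg {M : Type*} [AddCommGroup M] [Module ℝ M] {n : ℕ}
    (v ε' : Fin n → M) (e α β : Fin n → ℝ) (hZ : (∑ l, e l) ≠ 0) :
    ∑ j, ((e j * (∑ l, e l)⁻¹) • ε' j +
      (e j * -((∑ l, e l)⁻¹ * (∑ l, e l * (α l + β l)) * (∑ l, e l)⁻¹) +
       (∑ l, e l)⁻¹ * (e j * (α j + β j))) • v j) =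
    (∑ j, ((e j / ∑ l, e l) * α j) • (v j - ∑ l, (e l / ∑ l', e l') • v l)) +
      (∑ j, (e j / ∑ l, e l) • ε' j) +
      ∑ j, ((e j / ∑ l, e l) * β j) • (v j - ∑ l, (e l / ∑ l', e l') • v l) := by
  have hmerge : (∑ j, ((e j / ∑ l, e l) * α j) • (v j - ∑ l, (e l / ∑ l', e l') • v l)) +
      ∑ j, ((e j / ∑ l, e l) * β j) • (v j - ∑ l, (e l / ∑ l', e l') • v l) =
      ∑ j, ((e j / ∑ l, e l) * (α j + β j)) • (v j - ∑ l, (e l / ∑ l', e l') • v l) := by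
    rw [← Finset.sum_add_distrib]
    exact Finset.sum_congr rfl fun j _ => by rw [← add_smul, ← mul_add]
  rw [add_right_comm, hmerge]
  exact vec_alg0 v ε' e (fun j => α j + β j) hZ

noncomputable def attnComp (n d k : ℕ) (A : Matrix (Fin d) (Fin d) ℝ)
    (V : Matrix (Fin k) (Fin d) ℝ) (i : Fin n) :
    PiLp 2 (fun _ : Fin n => EuclideanSpace ℝ (Fin d)) → EuclideanSpace ℝ (Fin k) :=
  fun x => WithLp.toLp 2 (V.mulVec (∑ j, (Real.exp ((x i) ⬝ᵥ (Aᵀ.mulVec (x j))) /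
      ∑ l, Real.exp ((x i) ⬝ᵥ (Aᵀ.mulVec (x l)))) • x j))

lemma attnComp_hasFDerivAt {n d k : ℕ}
    (A : Matrix (Fin d) (Fin d) ℝ) (V : Matrix (Fin k) (Fin d) ℝ)
    (x : PiLp 2 (fun _ : Fin n => EuclideanSpace ℝ (Fin d))) (i : Fin n)
    (P : Fin n → Fin n → ℝ)
    (hP : ∀ i j, P i j = Real.exp ((x i) ⬝ᵥ (Aᵀ.mulVec (x j))) /
      ∑ l, Real.exp ((x i) ⬝ᵥ (Aᵀ.mulVec (x l)))) :
    ∃ Li : PiLp 2 (fun _ : Fin n => EuclideanSpace ℝ (Fin d)) →L[ℝ] EuclideanSpace ℝ (Fin k),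
      HasFDerivAt (attnComp n d k A V i) Li x ∧
      ∀ ε, Li ε =
          V.mulVec (∑ j, (P i j * ((x i) ⬝ᵥ (Aᵀ.mulVec (ε j)))) •
              (x j - ∑ l, P i l • x l)) +
          V.mulVec (∑ j, P i j • ε j) +
          V.mulVec (∑ j, (P i j * ((x j) ⬝ᵥ (A.mulVec (ε i)))) •
              (x j - ∑ l, P i l • x l)) := by
  have hZpos : 0 < ∑ l, Real.exp ((x i) ⬝ᵥ (Aᵀ.mulVec (x l))) :=
    Finset.sum_pos (fun l _ => Real.exp_pos _) ⟨i, Finset.mem_univ i⟩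
  have hb : ∀ j : Fin n,
      HasFDerivAt (fun y : PiLp 2 (fun _ : Fin n => EuclideanSpace ℝ (Fin d)) =>
        (dotCLM d A) (projCLM n d i y) (projCLM n d j y))
        ((dotCLM d A).precompR _ (x i) (projCLM n d j) +
          (dotCLM d A).precompL _ (projCLM n d i) (x j)) x :=
    fun j => (dotCLM d A).hasFDerivAt_of_bilinear
      (projCLM n d i).hasFDerivAt (projCLM n d j).hasFDerivAt
  have he := fun j : Fin n => (hb j).exp
  have hZ := HasFDerivAt.fun_sum (u := Finset.univ) (fun l (_ : l ∈ Finset.univ) => he l)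
  have hinv := (hasFDerivAt_inv' (𝕜 := ℝ) hZpos.ne').comp x hZ
  have hw := fun j : Fin n => (he j).mul hinv
  have hterm := fun j : Fin n => (hw j).smul (projCLM n d j).hasFDerivAt
  have hsum := HasFDerivAt.fun_sum (u := Finset.univ) (fun j (_ : j ∈ Finset.univ) => hterm j)
  have hFi := ((mulVecCLM d k V).hasFDerivAt).comp x hsum
  have heq : attnComp n d k A V i = (⇑(mulVecCLM d k V) ∘ fun y =>
      ∑ j, (Real.exp ((dotCLM d A) (projCLM n d i y) (projCLM n d j y)) *
        (Inv.inv ∘ fun y' => ∑ l, Real.exp ((dotCLM d A) (projCLM n d i y') (projCLM n d l y'))) y) •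
          (projCLM n d j) y) := by
    funext y
    simp only [attnComp, Function.comp_def, div_eq_mul_inv, mulVecCLM_apply, projCLM_apply,
      dotCLM_apply, WithLp.ofLp_sum, WithLp.ofLp_smul]
  refine ⟨_, heq ▸ hFi, fun ε => ?_⟩
  simp only [ContinuousLinearMap.coe_comp', Function.comp_apply, ContinuousLinearMap.coe_sum',
    Finset.sum_apply, ContinuousLinearMap.add_apply, ContinuousLinearMap.coe_smul',
    Pi.smul_apply, ContinuousLinearMap.smulRight_apply, ContinuousLinearMap.smul_apply,
    ContinuousLinearMap.comp_apply, ContinuousLinearMap.neg_apply,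
    ContinuousLinearMap.mulLeftRight_apply, ContinuousLinearMap.precompR_apply,
    ContinuousLinearMap.precompL_apply, ContinuousLinearMap.compL_apply,
    mulVecCLM_apply, projCLM_apply, dotCLM_apply, smul_eq_mul]
  have hβ : ∀ j, (x j) ⬝ᵥ (A.mulVec (ε i)) = (ε i) ⬝ᵥ (Aᵀ.mulVec (x j)) := fun j =>
    (by rw [Matrix.dotProduct_mulVec, Matrix.vecMul_transpose, dotProduct_comm] :
      (ε i) ⬝ᵥ (Aᵀ.mulVec (x j)) = (x j) ⬝ᵥ (A.mulVec (ε i))).symm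
  simp only [hP, hβ, WithLp.ofLp_sum, WithLp.ofLp_smul, WithLp.ofLp_add, WithLp.ofLp_sub]
  rw [← Matrix.mulVec_add, ← Matrix.mulVec_add]
  exact congrArg V.mulVec (vec_alg (fun j => (x j).ofLp) (fun j => (ε j).ofLp)
    (fun l => Real.exp ((x i) ⬝ᵥ (Aᵀ.mulVec (x l))))
    (fun j => (x i) ⬝ᵥ (Aᵀ.mulVec (ε j))) (fun j => (ε i) ⬝ᵥ (Aᵀ.mulVec (x j))) hZpos.ne')

/-- the differential of self-attention at `X` is given by the explicit
formula of Lemma "Jacobian of self-attention". -/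
theorem attn_hasFDerivAt {n d k : ℕ}
    (A : Matrix (Fin d) (Fin d) ℝ) (V : Matrix (Fin k) (Fin d) ℝ)
    (x : PiLp 2 (fun _ : Fin n => EuclideanSpace ℝ (Fin d)))
    (P : Fin n → Fin n → ℝ)
    (hP : ∀ i j, P i j = Real.exp ((x i) ⬝ᵥ (Aᵀ.mulVec (x j))) /
      ∑ l, Real.exp ((x i) ⬝ᵥ (Aᵀ.mulVec (x l)))) :
    ∃ L : PiLp 2 (fun _ : Fin n => EuclideanSpace ℝ (Fin d)) →L[ℝ]
        PiLp 2 (fun _ : Fin n => EuclideanSpace ℝ (Fin k)),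
      HasFDerivAt (attnF n d k A V) L x ∧
      ∀ (ε : PiLp 2 (fun _ : Fin n => EuclideanSpace ℝ (Fin d))) (i : Fin n),
        L ε i =
          V.mulVec (∑ j, (P i j * ((x i) ⬝ᵥ (Aᵀ.mulVec (ε j)))) •
              (x j - ∑ l, P i l • x l)) +
          V.mulVec (∑ j, P i j • ε j) +
          V.mulVec (∑ j, (P i j * ((x j) ⬝ᵥ (A.mulVec (ε i)))) •
              (x j - ∑ l, P i l • x l)) := by
  choose Φ' h1 h2 using fun i => attnComp_hasFDerivAt A V x i P hP
  have hpi := (hasFDerivAt_pi (𝕜 := ℝ) (F' := fun _ : Fin n => EuclideanSpace ℝ (Fin k))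
      (φ' := Φ') (x := x) (φ := attnComp n d k A V)).2 h1
  set e := (PiLp.continuousLinearEquiv 2 ℝ (fun _ : Fin n => EuclideanSpace ℝ (Fin k))).symm
  refine ⟨e.toContinuousLinearMap.comp (ContinuousLinearMap.pi Φ'),
    e.toContinuousLinearMap.hasFDerivAt.comp x hpi, ?_⟩
  intro ε i
  exact (h2 i ε)
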